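/- Let ε ∈ ℝ and let Φ_ε be the rational map Φ_ε(x,y) = ( (ε(ε+1)x² + εxy + (1−2ε)x)/D(x,y), (ε(2ε−4)x² − ε(ε+3)xy + 6εx − εy² + (2ε+1)y)/D(x,y) ), D(x,y) = 2ε²x² − ε(ε+1)x − εy + 2ε + 1. Define the density ν(x,y) = 1/(2|x|(ε²x² + 1)) on ℝ² \ {x = 0}. Then Φ_ε preserves the measure with density ν with respect to Lebesgue measure: for every (x,y) with x ≠ 0, D(x,y) ≠ 0, and the first component of Φ_ε(x,y) nonzero, one has ν(Φ_ε(x,y)) · |det JΦ_ε(x,y)| = ν(x,y), where JΦ_ε is the Jacobian matrix of Φ_ε. -/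

import Mathlib

/-- Denominator of the Kahan–Hirota–Kimura map `Φ_ε` of the system
`ẋ = x(x+y-2)`, `ẏ = -x(2x+y-3)`. -/
noncomputable def Dps (ε x y : ℝ) : ℝ :=
  2 * ε ^ 2 * x ^ 2 - ε * (ε + 1) * x - ε * y + 2 * ε + 1

/-- The Kahan–Hirota–Kimura map `Φ_ε` of the system `ẋ = x(x+y-2)`, `ẏ = -x(2x+y-3)`. -/
noncomputable def Phips (ε : ℝ) (q : ℝ × ℝ) : ℝ × ℝ :=
  ((ε * (ε + 1) * q.1 ^ 2 + ε * q.1 * q.2 + (1 - 2 * ε) * q.1) / Dps ε q.1 q.2,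
   (ε * (2 * ε - 4) * q.1 ^ 2 - ε * (ε + 3) * q.1 * q.2 + 6 * ε * q.1 - ε * q.2 ^ 2
      + (2 * ε + 1) * q.2) / Dps ε q.1 q.2)

/-- The invariant conic `C_h` of `Φ_ε`. -/
def Cps (ε h : ℝ) : Set (ℝ × ℝ) :=
  {q : ℝ × ℝ | (2 - 5 * ε ^ 2 - 2 * ε ^ 2 * h) * q.1 ^ 2 + 2 * q.1 * q.2 + q.2 ^ 2
      - 6 * q.1 - 4 * q.2 - 2 * h = 0}

/-- The invariant density `ν(x,y) = 1/(2|x|(ε²x²+1))` on `ℝ² \ {x = 0}`. -/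
noncomputable def nups (ε : ℝ) (q : ℝ × ℝ) : ℝ := 1 / (2 * |q.1| * (ε ^ 2 * q.1 ^ 2 + 1))

/-- `Φ_ε` preserves the measure with density `ν(x,y) = 1/(2|x|(ε²x²+1))` with respect
to the Lebesgue measure: `ν(Φ_ε(x,y))·|det JΦ_ε(x,y)| = ν(x,y)` wherever everything
is defined. -/
lemma clm_det_two (L : ℝ × ℝ →L[ℝ] ℝ × ℝ) :
    L.det = (L (1, 0)).1 * (L (0, 1)).2 - (L (0, 1)).1 * (L (1, 0)).2 := by
  have h := LinearMap.det_toMatrix (Module.Basis.finTwoProd ℝ) (L : ℝ × ℝ →ₗ[ℝ] ℝ × ℝ)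
  rw [ContinuousLinearMap.det, ← h, Matrix.det_fin_two]
  simp [LinearMap.toMatrix_apply]

theorem stmt_9 (ε x y : ℝ) (hx : x ≠ 0) (hD : Dps ε x y ≠ 0)
    (h1 : (Phips ε (x, y)).1 ≠ 0) :
    nups ε (Phips ε (x, y)) * |(fderiv ℝ (Phips ε) (x, y)).det| = nups ε (x, y) := by
  classical
  -- explicit derivative of `Phips ε` at `(x, y)`
  have hfst : HasFDerivAt (fun q : ℝ × ℝ => q.1)
      (ContinuousLinearMap.fst ℝ ℝ ℝ) (x, y) := hasFDerivAt_fst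
  have hsnd : HasFDerivAt (fun q : ℝ × ℝ => q.2)
      (ContinuousLinearMap.snd ℝ ℝ ℝ) (x, y) := hasFDerivAt_snd
  have hx2 := (hasDerivAt_pow 2 x).comp_hasFDerivAt (x, y) hfst
  have hy2 := (hasDerivAt_pow 2 y).comp_hasFDerivAt (x, y) hsnd
  have hDf : HasFDerivAt (fun q : ℝ × ℝ => Dps ε q.1 q.2) _ (x, y) :=
    ((((hx2.const_mul (2 * ε ^ 2)).sub (hfst.const_mul (ε * (ε + 1)))).sub
      (hsnd.const_mul ε)).add_const (2 * ε)).add_const 1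
  have hD0 : (fun q : ℝ × ℝ => Dps ε q.1 q.2) (x, y) ≠ 0 := hD
  have hDinv := (hasDerivAt_inv hD0).comp_hasFDerivAt (x, y) hDf
  have hP1f : HasFDerivAt (fun q : ℝ × ℝ =>
      ε * (ε + 1) * q.1 ^ 2 + ε * q.1 * q.2 + (1 - 2 * ε) * q.1) _ (x, y) :=
    ((hx2.const_mul (ε * (ε + 1))).add ((hfst.const_mul ε).mul hsnd)).add
      (hfst.const_mul (1 - 2 * ε))
  have hP2f : HasFDerivAt (fun q : ℝ × ℝ =>
      ε * (2 * ε - 4) * q.1 ^ 2 - ε * (ε + 3) * q.1 * q.2 + 6 * ε * q.1 - ε * q.2 ^ 2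
        + (2 * ε + 1) * q.2) _ (x, y) :=
    ((((hx2.const_mul (ε * (2 * ε - 4))).sub
      ((hfst.const_mul (ε * (ε + 3))).mul hsnd)).add (hfst.const_mul (6 * ε))).sub
      (hy2.const_mul ε)).add (hsnd.const_mul (2 * ε + 1))
  have h2 : HasFDerivAt (Phips ε) _ (x, y) := HasFDerivAt.prodMk (hP1f.mul hDinv) (hP2f.mul hDinv)
  -- the key algebraic identity
  have key : (fderiv ℝ (Phips ε) (x, y)).det * (x * (ε ^ 2 * x ^ 2 + 1)) =
      (Phips ε (x, y)).1 * (ε ^ 2 * (Phips ε (x, y)).1 ^ 2 + 1) := by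
    rw [h2.fderiv, clm_det_two]
    simp only [ContinuousLinearMap.prod_apply, ContinuousLinearMap.add_apply,
      ContinuousLinearMap.sub_apply, ContinuousLinearMap.smul_apply,
      ContinuousLinearMap.coe_fst', ContinuousLinearMap.coe_snd', smul_eq_mul,
      Phips, Dps, Function.comp]
    rw [Dps] at hD
    have hD' : ε * (x * (ε * x * 2 - (ε + 1)) - y + 2) + 1 ≠ 0 := by
      convert hD using 1; ring
    field_simp
    ring
  -- pass to absolute values
  have hqx : (0:ℝ) < ε ^ 2 * x ^ 2 + 1 := by positivity
  have hqu : (0:ℝ) < ε ^ 2 * (Phips ε (x, y)).1 ^ 2 + 1 := by positivity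
  have habs : |(fderiv ℝ (Phips ε) (x, y)).det| * (|x| * (ε ^ 2 * x ^ 2 + 1)) =
      |(Phips ε (x, y)).1| * (ε ^ 2 * (Phips ε (x, y)).1 ^ 2 + 1) := by
    have h := congrArg abs key
    rwa [abs_mul, abs_mul, abs_of_pos hqx, abs_mul, abs_of_pos hqu] at h
  have hax : |x| ≠ 0 := abs_ne_zero.mpr hx
  have hau : |(Phips ε (x, y)).1| ≠ 0 := abs_ne_zero.mpr h1
  simp only [nups]
  field_simp
  linear_combination (1 : ℝ) * habs
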